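/- There exist a finite group G and elements a, b ∈ G such that for every g ∈ G the subgroups ⟨a,g⟩ and ⟨b,g⟩ are T-groups, but there exists g ∈ G such that ⟨ab, g⟩ is not a T-group. Consequently, for the class 𝔉 of finite T-groups, the set of 𝔉-isolated elements of G is not closed under multiplication and hence is not the underlying set of a subgroup of G. -/
import Mathlib

universe u

/-- `X` is a T-group: whenever `H` is normal in `K` and `K` is normal in `X`,
then `H` (viewed as a subgroup of `X`) is normal in `X`. -/
def IsTGroup (X : Type u) [Group X] : Prop :=
  ∀ (K : Subgroup X) (H : Subgroup ↥K), K.Normal → H.Normal →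
    (H.map K.subtype).Normal

set_option maxRecDepth 40000

namespace TGW

/-! ### General group-theoretic lemmas -/

variable {Γ : Type*} [Group Γ]

open Subgroup

/-- A sufficient condition, phrased at the ambient level, for `IsTGroup ↥N`. -/
def Cond (N : Subgroup Γ) : Prop :=
  ∀ K H : Subgroup Γ, K ≤ N → H ≤ K →
    (∀ n ∈ N, ∀ k ∈ K, n * k * n⁻¹ ∈ K) →
    (∀ k ∈ K, ∀ h ∈ H, k * h * k⁻¹ ∈ H) →
    (∀ n ∈ N, ∀ h ∈ H, n * h * n⁻¹ ∈ H)

lemma cond_isTGroup {N : Subgroup Γ} (hC : Cond N) : IsTGroup ↥N := by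
  intro K' H'' hK' hH''
  set K : Subgroup Γ := K'.map N.subtype with hK
  set H : Subgroup Γ := (H''.map K'.subtype).map N.subtype with hH
  have hKN : K ≤ N := map_subtype_le _
  have hHK : H ≤ K := map_mono (map_subtype_le _)
  have h1 : ∀ n ∈ N, ∀ k ∈ K, n * k * n⁻¹ ∈ K := by
    rintro n hn k hk
    rcases hk with ⟨k', hk', rfl⟩
    exact ⟨⟨n, hn⟩ * k' * ⟨n, hn⟩⁻¹, hK'.conj_mem k' hk' ⟨n, hn⟩, rfl⟩
  have h2 : ∀ k ∈ K, ∀ h ∈ H, k * h * k⁻¹ ∈ H := by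
    rintro k hk h hh
    rcases hk with ⟨k', hk', rfl⟩
    rcases hh with ⟨h', hh', rfl⟩
    rcases hh' with ⟨h'', hh'', rfl⟩
    refine ⟨k' * K'.subtype h'' * k'⁻¹, ?_, rfl⟩
    exact ⟨⟨k', hk'⟩ * h'' * ⟨k', hk'⟩⁻¹, hH''.conj_mem h'' hh'' ⟨k', hk'⟩, rfl⟩
  have hc := hC K H hKN hHK h1 h2
  constructor
  intro h' hh' n'
  have : (N.subtype) (n' * h' * n'⁻¹) ∈ H :=
    hc n' n'.2 (N.subtype h') ⟨h', hh', rfl⟩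
  rcases this with ⟨w, hw, hweq⟩
  have : w = n' * h' * n'⁻¹ := Subtype.ext_iff.mpr hweq
  exact this ▸ hw

lemma not_isT {N K H : Subgroup Γ} (hKN : K ≤ N) (hHK : H ≤ K)
    (hKnorm : ∀ n ∈ N, ∀ k ∈ K, n * k * n⁻¹ ∈ K)
    (hHconj : ∀ k ∈ K, ∀ h ∈ H, k * h * k⁻¹ ∈ H)
    (n₀ h₀ : Γ) (hn₀ : n₀ ∈ N) (hh₀ : h₀ ∈ H)
    (hbad : n₀ * h₀ * n₀⁻¹ ∉ H) : ¬ IsTGroup ↥N := by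
  intro hT
  set K' : Subgroup ↥N := K.subgroupOf N with hK'
  set H' : Subgroup ↥N := H.subgroupOf N with hH'
  set H'' : Subgroup ↥K' := H'.comap K'.subtype with hH''
  have hK'norm : K'.Normal := by
    constructor
    intro k hk n
    simp only [hK', mem_subgroupOf] at hk ⊢
    exact hKnorm n n.2 k hk
  have hH''norm : H''.Normal := by
    constructor
    intro h hh k
    simp only [hH'', Subgroup.mem_comap, hH', mem_subgroupOf] at hh ⊢
    have hkK : (↑(K'.subtype k) : Γ) ∈ K := k.2
    exact hHconj _ hkK _ hh
  have key := hT K' H'' hK'norm hH''norm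
  have hmapeq : H''.map K'.subtype = H' := by
    rw [hH'', Subgroup.map_comap_eq, Subgroup.range_subtype]
    refine inf_eq_right.mpr ?_
    intro x hx
    simp only [hH', mem_subgroupOf] at hx
    simp only [hK', mem_subgroupOf]
    exact hHK hx
  rw [hmapeq] at key
  have hh₀N : h₀ ∈ N := hKN (hHK hh₀)
  have := key.conj_mem ⟨h₀, hh₀N⟩ (by simpa [hH', mem_subgroupOf] using hh₀) ⟨n₀, hn₀⟩
  simp only [hH', mem_subgroupOf] at this
  exact hbad this

lemma cond_abelian {N : Subgroup Γ} (hcomm : ∀ n ∈ N, ∀ m ∈ N, n * m = m * n) :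
    Cond N := by
  intro K H hKN hHK _ _ n hn h hh
  have : n * h = h * n := hcomm n hn h (hKN (hHK hh))
  rw [this, mul_assoc, mul_inv_cancel, mul_one]
  exact hh

lemma mem_closure_pair {a g : Γ} {A : Subgroup Γ} (ha : a ∈ A)
    (hnorm : ∀ n t : Γ, t ∈ A → n * t * n⁻¹ ∈ A) :
    ∀ n ∈ Subgroup.closure {a, g}, ∃ t ∈ A, ∃ m : ℤ, n = t * g ^ m := by
  intro n hn
  induction hn using Subgroup.closure_induction with
  | mem z hz =>
    rcases hz with rfl | rfl
    · exact ⟨z, ha, 0, by simp⟩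
    · exact ⟨1, one_mem _, 1, by simp⟩
  | one => exact ⟨1, one_mem _, 0, by simp⟩
  | mul u v _ _ hu hv =>
    rcases hu with ⟨t, ht, m, rfl⟩
    rcases hv with ⟨s, hs, r, rfl⟩
    refine ⟨t * (g ^ m * s * (g ^ m)⁻¹), ?_, m + r, by group⟩
    exact mul_mem ht (hnorm _ _ hs)
  | inv u _ hu =>
    rcases hu with ⟨t, ht, m, rfl⟩
    refine ⟨(g ^ m)⁻¹ * t⁻¹ * ((g ^ m)⁻¹)⁻¹, ?_, -m, by group⟩
    exact hnorm _ _ (inv_mem ht)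

lemma simple_of_gen {A : Subgroup Γ}
    (hgen : ∀ h ∈ A, h ≠ 1 → ∀ t ∈ A, ∃ n : ℕ, h ^ n = t) :
    ∀ H : Subgroup Γ, H ≤ A → H = ⊥ ∨ H = A := by
  intro H hHA
  by_cases hb : H = ⊥
  · exact Or.inl hb
  · right
    obtain ⟨h, hh, hne⟩ : ∃ h ∈ H, h ≠ 1 := by
      by_contra hcon
      push_neg at hcon
      exact hb (Subgroup.eq_bot_iff_forall _ |>.mpr hcon)
    refine le_antisymm hHA ?_
    intro t ht
    obtain ⟨n, rfl⟩ := hgen h (hHA hh) hne t ht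
    exact pow_mem hh n

/-- The subnormality argument: if `A ≤ N` is "normal in `N`", has no nontrivial
proper subgroups, is self-centralizing in `N`, and contains all commutators of `N`,
then every subnormal-of-depth-2 subgroup of `N` is normal in `N`. -/
lemma cond_of {N A : Subgroup Γ}
    (hA_le : A ≤ N)
    (hA_norm : ∀ n ∈ N, ∀ t ∈ A, n * t * n⁻¹ ∈ A)
    (hSimple : ∀ H : Subgroup Γ, H ≤ A → H = ⊥ ∨ H = A)
    (hCent : ∀ n ∈ N, (∀ t ∈ A, n * t = t * n) → n ∈ A)
    (hComm : ∀ n ∈ N, ∀ m ∈ N, n * m * n⁻¹ * m⁻¹ ∈ A) : Cond N := by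
  intro K H hKN hHK hKnorm hHconj n hn h hh
  by_cases hKA : K ≤ A
  · rcases hSimple H (hHK.trans hKA) with rfl | rfl
    · simpa using hh
    · exact hA_norm n hn h hh
  · have hAK : A ≤ K := by
      rcases hSimple (K ⊓ A) inf_le_right with hbot | heq
      · exfalso
        apply hKA
        intro k hk
        have hkN : k ∈ N := hKN hk
        apply hCent k hkN
        intro t ht
        have w1 : k * t * k⁻¹ * t⁻¹ ∈ A := mul_mem (hA_norm k hkN t ht) (inv_mem ht)
        have w2 : k * t * k⁻¹ * t⁻¹ ∈ K := by
          have : t * k⁻¹ * t⁻¹ ∈ K := hKnorm t (hA_le ht) k⁻¹ (inv_mem hk)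
          have := mul_mem hk this
          simpa [mul_assoc] using this
        have : k * t * k⁻¹ * t⁻¹ ∈ (⊥ : Subgroup Γ) := hbot ▸ ⟨w2, w1⟩
        have he : k * t * k⁻¹ * t⁻¹ = 1 := by simpa using this
        calc k * t = (k * t * k⁻¹ * t⁻¹) * (t * k) := by group
        _ = t * k := by rw [he, one_mul]
      · calc A = K ⊓ A := heq.symm
        _ ≤ K := inf_le_left
    rcases hSimple (H ⊓ A) inf_le_right with hbot | heq
    · have h1 : h = 1 := by
        have hhN : h ∈ N := hKN (hHK hh)
        have hA : h ∈ A := by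
          apply hCent h hhN
          intro t ht
          have w1 : h⁻¹ * (t * h * t⁻¹) ∈ H :=
            mul_mem (inv_mem hh) (hHconj t (hAK ht) h hh)
          have w2 : h⁻¹ * (t * h * t⁻¹) ∈ A := by
            have : h⁻¹ * t * h ∈ A := by
              have := hA_norm h⁻¹ (inv_mem hhN) t ht
              simpa using this
            have := mul_mem this (inv_mem ht)
            simpa [mul_assoc] using this
          have : h⁻¹ * (t * h * t⁻¹) ∈ (⊥ : Subgroup Γ) := hbot ▸ ⟨w1, w2⟩
          have he : h⁻¹ * (t * h * t⁻¹) = 1 := by simpa using this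
          have h2 : t * h * t⁻¹ = h := by
            have := congrArg (fun z => h * z) he
            simpa [mul_assoc] using this
          exact (mul_inv_eq_iff_eq_mul.mp h2).symm
        have : h ∈ (⊥ : Subgroup Γ) := hbot ▸ ⟨hh, hA⟩
        simpa using this
      subst h1
      simpa using hh
    · have hAH : A ≤ H := by
        calc A = H ⊓ A := heq.symm
        _ ≤ H := inf_le_left
      have hw : h⁻¹ * n * h * n⁻¹ ∈ A := by
        have := hComm h⁻¹ (inv_mem (hKN (hHK hh))) n hn
        simpa using this
      have : n * h * n⁻¹ = h * (h⁻¹ * n * h * n⁻¹) := by group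
      rw [this]
      exact mul_mem hh (hAH hw)

/-! ### The concrete group of order 100 -/

structure GG where
  x : ZMod 5
  y : ZMod 5
  k : ZMod 4
deriving DecidableEq, Fintype

namespace GG
instance : One GG := ⟨⟨0, 0, 0⟩⟩
instance : Mul GG := ⟨fun u v => ⟨u.x + 2 ^ u.k.val * v.x, u.y + 3 ^ u.k.val * v.y, u.k + v.k⟩⟩
instance : Inv GG := ⟨fun v => ⟨-(2 ^ (-v.k).val * v.x), -(3 ^ (-v.k).val * v.y), -v.k⟩⟩

lemma mul_def (u v : GG) :
    u * v = ⟨u.x + 2 ^ u.k.val * v.x, u.y + 3 ^ u.k.val * v.y, u.k + v.k⟩ := rfl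
lemma inv_def (v : GG) :
    v⁻¹ = ⟨-(2 ^ (-v.k).val * v.x), -(3 ^ (-v.k).val * v.y), -v.k⟩ := rfl

lemma pow2 : ∀ i j : ZMod 4, (2 : ZMod 5) ^ (i + j).val = 2 ^ i.val * 2 ^ j.val := by decide
lemma pow3 : ∀ i j : ZMod 4, (3 : ZMod 5) ^ (i + j).val = 3 ^ i.val * 3 ^ j.val := by decide

instance : Group GG := Group.ofLeftAxioms
  (fun u v w => by
    simp only [mul_def, mk.injEq]
    refine ⟨?_, ?_, ?_⟩
    · rw [pow2]; ring
    · rw [pow3]; ring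
    · ring)
  (by decide)
  (by decide)

lemma k_mul (u v : GG) : (u * v).k = u.k + v.k := rfl
lemma k_inv (v : GG) : (v⁻¹).k = -v.k := rfl
end GG

open GG

def a : GG := ⟨1, 0, 0⟩
def b : GG := ⟨0, 1, 0⟩
def c : GG := ⟨0, 0, 1⟩
def az (p : ZMod 5) : GG := ⟨p, 0, 0⟩
def bz (q : ZMod 5) : GG := ⟨0, q, 0⟩
def pz (p q : ZMod 5) : GG := ⟨p, q, 0⟩
def dz (p : ZMod 5) : GG := ⟨p, p, 0⟩

def Aa : Subgroup GG where
  carrier := {v | v.y = 0 ∧ v.k = 0}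
  one_mem' := ⟨rfl, rfl⟩
  mul_mem' := fun hu hv => by simp_all [mul_def]
  inv_mem' := fun hu => by simp_all [inv_def]

def Ab : Subgroup GG where
  carrier := {v | v.x = 0 ∧ v.k = 0}
  one_mem' := ⟨rfl, rfl⟩
  mul_mem' := fun hu hv => by simp_all [mul_def]
  inv_mem' := fun hu => by simp_all [inv_def]

def Pk : Subgroup GG where
  carrier := {v | v.k = 0}
  one_mem' := rfl
  mul_mem' := fun hu hv => by simp_all [mul_def]
  inv_mem' := fun hu => by simp_all [inv_def]

def Aab : Subgroup GG where
  carrier := {v | v.x = v.y ∧ v.k = 0}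
  one_mem' := ⟨rfl, rfl⟩
  mul_mem' := fun hu hv => by simp_all [mul_def]
  inv_mem' := fun hu => by simp_all [inv_def]

instance : DecidablePred (· ∈ Aa) := fun v => decidable_of_iff (v.y = 0 ∧ v.k = 0) Iff.rfl
instance : DecidablePred (· ∈ Ab) := fun v => decidable_of_iff (v.x = 0 ∧ v.k = 0) Iff.rfl
instance : DecidablePred (· ∈ Pk) := fun v => decidable_of_iff (v.k = 0) Iff.rfl
instance : DecidablePred (· ∈ Aab) := fun v => decidable_of_iff (v.x = v.y ∧ v.k = 0) Iff.rfl

lemma mem_Aa {v : GG} : v ∈ Aa ↔ ∃ p, v = az p :=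
  ⟨fun h => ⟨v.x, by cases v with | mk x y k => simp_all [az, Aa]⟩,
   fun ⟨p, hp⟩ => hp ▸ ⟨rfl, rfl⟩⟩
lemma mem_Ab {v : GG} : v ∈ Ab ↔ ∃ q, v = bz q :=
  ⟨fun h => ⟨v.y, by cases v with | mk x y k => simp_all [bz, Ab]⟩,
   fun ⟨p, hp⟩ => hp ▸ ⟨rfl, rfl⟩⟩
lemma mem_Pk {v : GG} : v ∈ Pk ↔ ∃ p q, v = pz p q :=
  ⟨fun h => ⟨v.x, v.y, by cases v with | mk x y k => simp_all [pz, Pk]⟩,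
   fun ⟨p, q, hp⟩ => hp ▸ rfl⟩
lemma mem_Aab {v : GG} : v ∈ Aab ↔ ∃ p, v = dz p :=
  ⟨fun h => ⟨v.x, by cases v with | mk x y k =>
      obtain ⟨h1, h2⟩ := h; simp_all [dz, Aab]⟩,
   fun ⟨p, hp⟩ => hp ▸ ⟨rfl, rfl⟩⟩

/-! decidable facts -/

lemma F3 : ∀ v : GG, v.k = 1 ∨ v.k = 3 → v ^ (4 : ℕ) = 1 := by decide
lemma F4 : ∀ v : GG, v.k = 2 → v ^ (2 : ℕ) = 1 := by decide
lemma comm_pz : ∀ p q r s : ZMod 5, pz p q * pz r s = pz r s * pz p q := by decide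
lemma norm_az : ∀ n : GG, ∀ p : ZMod 5, n * az p * n⁻¹ ∈ Aa := by decide
lemma norm_bz : ∀ n : GG, ∀ p : ZMod 5, n * bz p * n⁻¹ ∈ Ab := by decide
lemma gen_az : ∀ p q : ZMod 5, p ≠ 0 → ∃ n : Fin 5, (az p) ^ (n : ℕ) = az q := by decide
lemma gen_bz : ∀ p q : ZMod 5, p ≠ 0 → ∃ n : Fin 5, (bz p) ^ (n : ℕ) = bz q := by decide
lemma cent_a : ∀ v : GG, v * a = a * v → v.k = 0 := by decide
lemma cent_b : ∀ v : GG, v * b = b * v → v.k = 0 := by decide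
lemma conj_dz : ∀ p q r : ZMod 5, pz p q * dz r * (pz p q)⁻¹ ∈ Aab := by decide
lemma repr_pz : ∀ p q : ZMod 5, pz p q = a ^ p.val * b ^ q.val := by decide
lemma km_cases : ∀ κ : ZMod 4, κ = 0 ∨ κ = 1 ∨ κ = 2 ∨ κ = 3 := by decide

lemma comm_Pk : ∀ u ∈ Pk, ∀ v ∈ Pk, u * v = v * u := by
  intro u hu v hv
  obtain ⟨p, q, rfl⟩ := mem_Pk.mp hu
  obtain ⟨r, s, rfl⟩ := mem_Pk.mp hv
  exact comm_pz p q r s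

lemma norm_Pk : ∀ n t : GG, t ∈ Pk → n * t * n⁻¹ ∈ Pk := by
  intro n t ht
  show (n * t * n⁻¹).k = 0
  have ht' : t.k = 0 := ht
  simp only [k_mul, k_inv, ht']
  ring

/-! k-component of powers -/

def kh : GG →* Multiplicative (ZMod 4) where
  toFun := fun v => Multiplicative.ofAdd v.k
  map_one' := rfl
  map_mul' := fun u v => rfl

lemma zpow_k (g : GG) (m : ℤ) : (g ^ m).k = (m : ZMod 4) * g.k := by
  have h1 : kh (g ^ m) = (kh g) ^ m := map_zpow kh g m
  have h2 : (g ^ m).k = Multiplicative.toAdd ((Multiplicative.ofAdd g.k) ^ m) :=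
    congrArg Multiplicative.toAdd h1
  rw [h2, toAdd_zpow, toAdd_ofAdd, zsmul_eq_mul]

lemma gpow_eq_one (g : GG) (hk : g.k ≠ 0) (m : ℤ) (h0 : (g ^ m).k = 0) : g ^ m = 1 := by
  rw [zpow_k] at h0
  have h4 : ∀ q : ℤ, m = 4 * q → g ^ m = 1 := by
    rintro q rfl
    have h4' : g ^ (4 : ℤ) = 1 ∨ g.k = 2 := by
      rcases km_cases g.k with h | h | h | h
      · exact absurd h hk
      · exact Or.inl (by rw [show (4:ℤ) = ((4:ℕ):ℤ) from rfl, zpow_natCast]; exact F3 g (Or.inl h))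
      · exact Or.inr h
      · exact Or.inl (by rw [show (4:ℤ) = ((4:ℕ):ℤ) from rfl, zpow_natCast]; exact F3 g (Or.inr h))
    rcases h4' with h | h
    · rw [zpow_mul, h]; exact one_zpow q
    · have h2 : g ^ (2 : ℤ) = 1 := by
        rw [show (2:ℤ) = ((2:ℕ):ℤ) from rfl, zpow_natCast]; exact F4 g h
      rw [show (4 : ℤ) * q = 2 * (2 * q) by ring, zpow_mul, h2, one_zpow]
  rcases km_cases g.k with h | h | h | h
  · exact absurd h hk
  · rw [h, mul_one] at h0
    obtain ⟨q, hq⟩ := (ZMod.intCast_zmod_eq_zero_iff_dvd m 4).mp h0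
    exact h4 q hq
  · rw [h] at h0
    have h2m : ((2 * m : ℤ) : ZMod 4) = 0 := by push_cast; rw [mul_comm]; exact h0
    have hdvd : (4 : ℤ) ∣ 2 * m := (ZMod.intCast_zmod_eq_zero_iff_dvd _ 4).mp h2m
    obtain ⟨q, hq⟩ : (2 : ℤ) ∣ m := by omega
    have h2 : g ^ (2 : ℤ) = 1 ∨ g.k = 2 → g ^ m = 1 := by
      intro hc
      rcases hc with hc | hc
      · rw [hq, zpow_mul, hc, one_zpow]
      · have : g ^ (2:ℤ) = 1 := by
          rw [show (2:ℤ) = ((2:ℕ):ℤ) from rfl, zpow_natCast]; exact F4 g hc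
        rw [hq, zpow_mul, this, one_zpow]
    exact h2 (Or.inr h)
  · rw [h] at h0
    have h9 : (3 : ZMod 4) * 3 = 1 := by decide
    have h0' : (m : ZMod 4) = 0 := by
      calc (m : ZMod 4) = (m : ZMod 4) * 3 * 3 := by rw [mul_assoc, h9, mul_one]
      _ = 0 * 3 := by rw [h0]
      _ = 0 := by rw [zero_mul]
    obtain ⟨q, hq⟩ := (ZMod.intCast_zmod_eq_zero_iff_dvd m 4).mp h0'
    exact h4 q hq

/-! ### `Cond` for the closures `⟨e, g⟩` -/

lemma cond_closure (e g : GG) (A : Subgroup GG)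
    (he : e ∈ A) (hene : e ≠ 1)
    (hA_norm : ∀ n t : GG, t ∈ A → n * t * n⁻¹ ∈ A)
    (hA_gen : ∀ h ∈ A, h ≠ 1 → ∀ t ∈ A, ∃ n : ℕ, h ^ n = t)
    (hA_comm : ∀ t ∈ A, ∀ u ∈ A, t * u = u * t)
    (hAk : ∀ t ∈ A, t.k = 0)
    (hCentE : ∀ v : GG, v * e = e * v → v.k = 0) :
    Cond (Subgroup.closure {e, g}) := by
  set N := Subgroup.closure ({e, g} : Set GG) with hN
  by_cases hgk : g.k = 0
  · apply cond_abelian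
    have hNP : N ≤ Pk := by
      rw [hN]
      refine (Subgroup.closure_le _).mpr ?_
      rintro z (rfl | rfl)
      · exact hAk z he
      · exact hgk
    intro n hn m hm
    exact comm_Pk n (hNP hn) m (hNP hm)
  · have decomp := mem_closure_pair (a := e) (g := g) he hA_norm
    apply cond_of (A := A)
    · intro t ht
      obtain ⟨n, rfl⟩ := hA_gen e he hene t ht
      exact pow_mem (Subgroup.subset_closure (Set.mem_insert _ _)) n
    · intro n _ t ht
      exact hA_norm n t ht
    · exact simple_of_gen hA_gen
    · intro n hn hcomm
      obtain ⟨t, ht, m, rfl⟩ := decomp _ hn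
      have hcm : g ^ m * e = e * g ^ m := by
        have h1 : t * g ^ m * e = e * (t * g ^ m) := hcomm e he
        have h2 : e * (t * g ^ m) = t * (e * g ^ m) := by
          rw [← mul_assoc, hA_comm e he t ht, mul_assoc]
        rw [h2, mul_assoc] at h1
        exact mul_left_cancel h1
      have hk0 : (g ^ m).k = 0 := hCentE _ hcm
      rw [gpow_eq_one g hgk m hk0, mul_one]
      exact ht
    · intro n hn m hm
      have hwN : n * m * n⁻¹ * m⁻¹ ∈ N :=
        mul_mem (mul_mem (mul_mem hn hm) (inv_mem hn)) (inv_mem hm)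
      obtain ⟨t, ht, s, hts⟩ := decomp _ hwN
      have hk0 : (n * m * n⁻¹ * m⁻¹).k = 0 := by
        simp only [k_mul, k_inv]
        ring
      have hks : (g ^ s).k = 0 := by
        have := congrArg GG.k hts
        rw [hk0, k_mul, hAk t ht, zero_add] at this
        exact this.symm
      rw [hts, gpow_eq_one g hgk s hks, mul_one]
      exact ht

lemma isT_a : ∀ g : GG, IsTGroup ↥(Subgroup.closure {a, g}) := by
  intro g
  apply cond_isTGroup
  apply cond_closure a g Aa ⟨rfl, rfl⟩ (by decide)
  · intro n t ht
    obtain ⟨p, rfl⟩ := mem_Aa.mp ht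
    exact norm_az n p
  · intro h hh hne t ht
    obtain ⟨p, rfl⟩ := mem_Aa.mp hh
    obtain ⟨q, rfl⟩ := mem_Aa.mp ht
    have hp : p ≠ 0 := fun h0 => hne (by rw [h0]; rfl)
    obtain ⟨n, hn⟩ := gen_az p q hp
    exact ⟨(n : ℕ), hn⟩
  · intro t ht u hu
    obtain ⟨p, rfl⟩ := mem_Aa.mp ht
    obtain ⟨q, rfl⟩ := mem_Aa.mp hu
    exact comm_pz p 0 q 0
  · exact fun t ht => ht.2
  · exact cent_a

lemma isT_b : ∀ g : GG, IsTGroup ↥(Subgroup.closure {b, g}) := by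
  intro g
  apply cond_isTGroup
  apply cond_closure b g Ab ⟨rfl, rfl⟩ (by decide)
  · intro n t ht
    obtain ⟨p, rfl⟩ := mem_Ab.mp ht
    exact norm_bz n p
  · intro h hh hne t ht
    obtain ⟨p, rfl⟩ := mem_Ab.mp hh
    obtain ⟨q, rfl⟩ := mem_Ab.mp ht
    have hp : p ≠ 0 := fun h0 => hne (by rw [h0]; rfl)
    obtain ⟨n, hn⟩ := gen_bz p q hp
    exact ⟨(n : ℕ), hn⟩
  · intro t ht u hu
    obtain ⟨p, rfl⟩ := mem_Ab.mp ht
    obtain ⟨q, rfl⟩ := mem_Ab.mp hu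
    exact comm_pz 0 p 0 q
  · exact fun t ht => ht.2
  · exact cent_b

lemma not_isT_ab : ¬ IsTGroup ↥(Subgroup.closure {a * b, c}) := by
  set N := Subgroup.closure ({a * b, c} : Set GG) with hN
  have hab : a * b ∈ N := Subgroup.subset_closure (Set.mem_insert _ _)
  have hc : c ∈ N := Subgroup.subset_closure (Set.mem_insert_of_mem _ rfl)
  have hbN : b ∈ N := by
    have h1 : (a*b) * (a*b) * (a*b) * ((c⁻¹ * (a*b) * c)⁻¹) ∈ N :=
      mul_mem (mul_mem (mul_mem hab hab) hab)
        (inv_mem (mul_mem (mul_mem (inv_mem hc) hab) hc))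
    have h2 : (a*b) * (a*b) * (a*b) * ((c⁻¹ * (a*b) * c)⁻¹) = b := by decide
    rwa [h2] at h1
  have haN : a ∈ N := by
    have h1 : (a*b) * b⁻¹ ∈ N := mul_mem hab (inv_mem hbN)
    have h2 : (a*b) * b⁻¹ = a := by decide
    rwa [h2] at h1
  have hKN : Pk ≤ N := by
    intro t ht
    obtain ⟨p, q, rfl⟩ := mem_Pk.mp ht
    rw [repr_pz]
    exact mul_mem (pow_mem haN _) (pow_mem hbN _)
  refine not_isT (K := Pk) (H := Aab) hKN (fun v hv => hv.2)
    (fun n _ k hk => norm_Pk n k hk) ?_ c (a * b) hc (by decide) (by decide)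
  intro k hk h hh
  obtain ⟨p, q, rfl⟩ := mem_Pk.mp hk
  obtain ⟨r, rfl⟩ := mem_Aab.mp hh
  exact conj_dz p q r

end TGW

theorem tgroup_isolated_not_closed_under_mul :
    ∃ (G : Type) (instG : Group G),
      letI := instG
      Finite G ∧
      ∃ a b : G,
        (∀ g : G, IsTGroup ↥(Subgroup.closure {a, g})) ∧
        (∀ g : G, IsTGroup ↥(Subgroup.closure {b, g})) ∧
        (∃ g : G, ¬ IsTGroup ↥(Subgroup.closure {a * b, g})) ∧
        ¬ ∃ H : Subgroup G,
            (H : Set G) = {x : G | ∀ y : G, IsTGroup ↥(Subgroup.closure {x, y})} := by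
  refine ⟨TGW.GG, inferInstance, Finite.of_fintype _, TGW.a, TGW.b,
    TGW.isT_a, TGW.isT_b, ⟨TGW.c, TGW.not_isT_ab⟩, ?_⟩
  rintro ⟨H, hH⟩
  have hmem : ∀ z : TGW.GG, z ∈ H ↔ ∀ y, IsTGroup ↥(Subgroup.closure {z, y}) := by
    intro z
    rw [← SetLike.mem_coe, hH]
    exact Iff.rfl
  have haH : TGW.a ∈ H := (hmem _).mpr TGW.isT_a
  have hbH : TGW.b ∈ H := (hmem _).mpr TGW.isT_b
  have habH := (hmem _).mp (mul_mem haH hbH)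
  exact TGW.not_isT_ab (habH TGW.c)
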